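/- For all i ∈ Fin a and j ∈ Fin b, the parallel composition of the pure states e i and e j is the uniform mixture P(e i, e j) = (1/2)·e(i,j,+1) + (1/2)·e(i,j,−1). Consequently P(e i, e j) is a deterministic state that is not an extreme point of the standard simplex of V (BCT violates purity of parallel composition of states), and it is the sum of two nonproportional entrywise-nonnegative vectors, hence not atomic (BCT violates atomicity of parallel composition of states). -/

import Mathlib

/-- The sign group `{+1, -1}` under multiplication. -/
abbrev G : Type := ℤˣ

/-- Parallel composition of single-system states in BCT:
`P(ρ,σ)(i,j,s) = ρ i · σ j / 2`. -/
noncomputable def P (a b : ℕ) (ρ : Fin a → ℝ) (σ : Fin b → ℝ) : Fin a × Fin b × G → ℝ :=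
  fun p => ρ p.1 * σ p.2.1 / 2

/-- The pure states of the bipartite composite: standard basis vectors `e(i,j,s)`. -/
noncomputable def e (a b : ℕ) (p : Fin a × Fin b × G) : Fin a × Fin b × G → ℝ :=
  Pi.single p 1

/-- A vector of the composite space is atomic if in any decomposition into a sum of
two entrywise-nonnegative vectors, the two summands are proportional. -/
def Atomic (a b : ℕ) (w : Fin a × Fin b × G → ℝ) : Prop :=
  ∀ u v : Fin a × Fin b × G → ℝ, (∀ p, 0 ≤ u p) → (∀ p, 0 ≤ v p) → w = u + v →
    (∃ c : ℝ, u = c • v) ∨ (∃ c : ℝ, v = c • u)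

/-- The parallel composition of two pure states is the uniform mixture
`P(e i, e j) = (1/2)·e(i,j,+1) + (1/2)·e(i,j,−1)`; it is a deterministic state
that is not an extreme point of the simplex (violation of purity of parallel
composition) and is a sum of two nonproportional nonnegative vectors, hence not
atomic (violation of atomicity of parallel composition). -/
theorem bct_violates_purity_and_atomicity_of_parallel_composition
    (a b : ℕ) (ha : 0 < a) (hb : 0 < b) (i : Fin a) (j : Fin b) :
    P a b (Pi.single i 1) (Pi.single j 1) =
      (1 / 2 : ℝ) • e a b (i, j, 1) + (1 / 2 : ℝ) • e a b (i, j, -1) ∧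
    P a b (Pi.single i 1) (Pi.single j 1) ∈ stdSimplex ℝ (Fin a × Fin b × G) ∧
    P a b (Pi.single i 1) (Pi.single j 1) ∉
      Set.extremePoints ℝ (stdSimplex ℝ (Fin a × Fin b × G)) ∧
    (∃ u v : Fin a × Fin b × G → ℝ,
      (∀ p, 0 ≤ u p) ∧ (∀ p, 0 ≤ v p) ∧
      P a b (Pi.single i 1) (Pi.single j 1) = u + v ∧
      (¬ ∃ c : ℝ, u = c • v) ∧ (¬ ∃ c : ℝ, v = c • u)) ∧
    ¬ Atomic a b (P a b (Pi.single i 1) (Pi.single j 1)) := by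
  have heq : P a b (Pi.single i 1) (Pi.single j 1) =
      (1 / 2 : ℝ) • e a b (i, j, 1) + (1 / 2 : ℝ) • e a b (i, j, -1) := by
    funext p
    obtain ⟨x, y, s⟩ := p
    rcases Int.units_eq_one_or s with hs | hs <;>
      subst hs <;>
      simp [P, e, Pi.single_apply, Prod.ext_iff] <;>
      by_cases hx : x = i <;> by_cases hy : y = j <;>
      simp [hx, hy] <;> norm_num
  have hes : ∀ p : Fin a × Fin b × G, e a b p ∈ stdSimplex ℝ (Fin a × Fin b × G) := by
    intro p
    refine ⟨fun q => ?_, ?_⟩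
    · simp only [e, Pi.single_apply]
      split <;> norm_num
    · simp [e, Finset.sum_pi_single']
  have hmem : P a b (Pi.single i 1) (Pi.single j 1) ∈ stdSimplex ℝ (Fin a × Fin b × G) := by
    rw [heq]
    have h1 := hes (i, j, 1)
    have h2 := hes (i, j, -1)
    refine ⟨fun q => ?_, ?_⟩
    · have := h1.1 q
      have := h2.1 q
      simp only [Pi.add_apply, Pi.smul_apply, smul_eq_mul]
      nlinarith
    · simp only [Pi.add_apply, Pi.smul_apply, smul_eq_mul]
      rw [Finset.sum_add_distrib, ← Finset.mul_sum, ← Finset.mul_sum, h1.2, h2.2]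
      norm_num
  have hne : (1 : G) ≠ (-1 : G) := by decide
  have hPne : e a b (i, j, 1) ≠ P a b (Pi.single i 1) (Pi.single j 1) := by
    intro h
    have := congrFun h (i, j, 1)
    rw [heq] at this
    simp [e, Pi.single_apply, Prod.ext_iff, hne] at this
  refine ⟨heq, hmem, ?_, ?_, ?_⟩
  · intro hext
    have hop : P a b (Pi.single i 1) (Pi.single j 1) ∈
        openSegment ℝ (e a b (i, j, 1)) (e a b (i, j, -1)) := by
      exact ⟨1/2, 1/2, by norm_num, by norm_num, by norm_num, heq.symm⟩
    exact hPne (hext.2 (hes (i, j, 1)) (hes (i, j, -1)) hop)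
  · refine ⟨(1 / 2 : ℝ) • e a b (i, j, 1), (1 / 2 : ℝ) • e a b (i, j, -1),
      fun p => ?_, fun p => ?_, heq, ?_, ?_⟩
    · have := (hes (i, j, 1)).1 p
      simp only [Pi.smul_apply, smul_eq_mul]; linarith
    · have := (hes (i, j, -1)).1 p
      simp only [Pi.smul_apply, smul_eq_mul]; linarith
    · rintro ⟨c, hc⟩
      have := congrFun hc (i, j, 1)
      simp [e, Pi.single_apply, Prod.ext_iff, hne] at this
    · rintro ⟨c, hc⟩
      have := congrFun hc (i, j, -1)
      simp [e, Pi.single_apply, Prod.ext_iff, hne.symm] at this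
  · intro hA
    obtain ⟨u, v, hu, hv, hsum, hnp1, hnp2⟩ :
        ∃ u v : Fin a × Fin b × G → ℝ,
          (∀ p, 0 ≤ u p) ∧ (∀ p, 0 ≤ v p) ∧
          P a b (Pi.single i 1) (Pi.single j 1) = u + v ∧
          (¬ ∃ c : ℝ, u = c • v) ∧ (¬ ∃ c : ℝ, v = c • u) := by
      refine ⟨(1 / 2 : ℝ) • e a b (i, j, 1), (1 / 2 : ℝ) • e a b (i, j, -1),
        fun p => ?_, fun p => ?_, heq, ?_, ?_⟩
      · have := (hes (i, j, 1)).1 p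
        simp only [Pi.smul_apply, smul_eq_mul]; linarith
      · have := (hes (i, j, -1)).1 p
        simp only [Pi.smul_apply, smul_eq_mul]; linarith
      · rintro ⟨c, hc⟩
        have := congrFun hc (i, j, 1)
        simp [e, Pi.single_apply, Prod.ext_iff, hne] at this
      · rintro ⟨c, hc⟩
        have := congrFun hc (i, j, -1)
        simp [e, Pi.single_apply, Prod.ext_iff, hne.symm] at this
    rcases hA u v hu hv hsum with h | h
    · exact hnp1 h
    · exact hnp2 h
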